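/- The n-sided I-patch interpolates all ribbon-bounding intersections: let R₁,…,Rₙ, B₁,…,Bₙ : ℝ² → ℝ be differentiable functions, w₀, w₁,…,wₙ ∈ ℝ, and I = Σᵢ wᵢ·Rᵢ·Πⱼ≠ᵢ Bⱼ² + w₀·Πⱼ Bⱼ². If p ∈ ℝ² satisfies Rₖ(p) = 0 and Bₖ(p) = 0 for some index k, then I(p) = 0 and ∇I(p) = wₖ·(Πⱼ≠ₖ Bⱼ(p)²)·∇Rₖ(p). -/

import Mathlib

open Finset

/-- The n-sided I-patch interpolates all ribbon–bounding intersections: with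
differentiable `R₁,…,Rₙ, B₁,…,Bₙ` and
`I = Σᵢ wᵢ·Rᵢ·Πⱼ≠ᵢ Bⱼ² + w₀·Πⱼ Bⱼ²`, if `Rₖ(p) = 0` and `Bₖ(p) = 0` then
`I(p) = 0` and `∇I(p) = wₖ·(Πⱼ≠ₖ Bⱼ(p)²)·∇Rₖ(p)`. -/
theorem stmt_11
    (n : ℕ) (R B : Fin n → ℝ × ℝ → ℝ)
    (hR : ∀ i, Differentiable ℝ (R i)) (hB : ∀ i, Differentiable ℝ (B i))
    (w₀ : ℝ) (w : Fin n → ℝ)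
    (I : ℝ × ℝ → ℝ)
    (hI : ∀ q, I q =
      ∑ i : Fin n, w i * R i q * ∏ j ∈ univ.erase i, (B j q) ^ 2
        + w₀ * ∏ j : Fin n, (B j q) ^ 2)
    (k : Fin n) (p : ℝ × ℝ) (hRk : R k p = 0) (hBk : B k p = 0) :
    I p = 0 ∧
    fderiv ℝ I p = (w k * ∏ j ∈ univ.erase k, (B j p) ^ 2) • fderiv ℝ (R k) p := by
  set P : ℝ × ℝ → ℝ := fun q => ∏ j ∈ univ.erase k, (B j q) ^ 2 with hPdef
  set h : ℝ × ℝ → ℝ := fun q =>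
    (∑ i ∈ univ.erase k, w i * R i q * ∏ j ∈ (univ.erase i).erase k, (B j q) ^ 2)
      + w₀ * ∏ j ∈ univ.erase k, (B j q) ^ 2 with hhdef
  have hIeq : I = fun q => w k * R k q * P q + (B k q) ^ 2 * h q := by
    funext q
    rw [hI q]
    have h1 : (∑ i : Fin n, w i * R i q * ∏ j ∈ univ.erase i, (B j q) ^ 2)
        = (∑ i ∈ univ.erase k, w i * R i q * ∏ j ∈ univ.erase i, (B j q) ^ 2)
          + w k * R k q * P q := by
      rw [← Finset.sum_erase_add univ _ (mem_univ k)]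
    rw [h1]
    have h2 : ∀ i ∈ univ.erase k,
        w i * R i q * ∏ j ∈ univ.erase i, (B j q) ^ 2
        = (B k q) ^ 2 * (w i * R i q * ∏ j ∈ (univ.erase i).erase k, (B j q) ^ 2) := by
      intro i hi
      have hk : k ∈ univ.erase i := by
        simp [Finset.mem_erase, (Finset.mem_erase.mp hi).1.symm]
      rw [← Finset.mul_prod_erase _ _ hk]
      ring
    rw [Finset.sum_congr rfl h2, ← Finset.mul_sum,
      ← Finset.mul_prod_erase univ (fun j => (B j q) ^ 2) (mem_univ k)]
    ring
  have hprod : ∀ (u : Finset (Fin n)), Differentiable ℝ (fun x => ∏ j ∈ u, (B j x) ^ 2) :=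
    fun u q =>
      (HasFDerivAt.finset_prod fun i _ => ((hB i q).pow 2).hasFDerivAt).differentiableAt
  have hPdiff : Differentiable ℝ P := by
    rw [hPdef]; exact hprod _
  have hhdiff : Differentiable ℝ h := by
    rw [hhdef]
    apply Differentiable.add
    · exact Differentiable.fun_sum fun i _ => (((hR i).const_mul (w i)).fun_mul (hprod _))
    · exact (hprod _).const_mul w₀
  have hRkd : HasFDerivAt (R k) (fderiv ℝ (R k) p) p := ((hR k) p).hasFDerivAt
  have h1 : HasFDerivAt (fun q => w k * R k q * P q)
      ((w k * P p) • fderiv ℝ (R k) p) p := by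
    have h0 := ((hRkd.const_mul (w k)).fun_mul (hPdiff p).hasFDerivAt)
    rw [hRk] at h0
    simpa [smul_smul, mul_comm] using h0
  have h2 : HasFDerivAt (fun q => (B k q) ^ 2 * h q) (0 : (ℝ × ℝ) →L[ℝ] ℝ) p := by
    simp only [pow_two, mul_assoc]
    have h0 := ((hB k p).hasFDerivAt.fun_mul (((hB k p).hasFDerivAt).fun_mul (hhdiff p).hasFDerivAt))
    rw [hBk] at h0
    simpa using h0
  have hItot : HasFDerivAt I ((w k * P p) • fderiv ℝ (R k) p) p := by
    rw [hIeq]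
    simpa using h1.fun_add h2
  constructor
  · rw [hI p]
    have hp0 : (∏ j : Fin n, (B j p) ^ 2) = 0 :=
      Finset.prod_eq_zero (mem_univ k) (by simp [hBk])
    rw [hp0, mul_zero, add_zero]
    apply Finset.sum_eq_zero
    intro i _
    by_cases hik : i = k
    · simp [hik, hRk]
    · have hk : k ∈ univ.erase i := by simp [Ne.symm hik]
      rw [Finset.prod_eq_zero hk (by simp [hBk])]
      ring
  · exact hItot.fderiv
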